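/- Coset-averaged calibration: let W ⊆ F_2^m be a k-dimensional linear subspace and write [u] = u + W. Under the hypotheses of the main calibration theorem (E(a+b|ρ) ≠ 0 for all b), E(a;P_{[u]}) P([u]) = 2^{k-m} Σ_{b ∈ W^⊥, [x] ∈ F_2^m/W} (-1)^{(u+x)·b} E(a|ρ_{[x]}) p̃([x]|ρ) / E(a+b|ρ), where P([u]) = Σ_{w∈W} P(u+w), p̃([x]|ρ) = Σ_{w∈W} p̃(x+w|ρ), and E(a|ρ_{[x]}) p̃([x]|ρ) = Σ_{w∈W} E(a|ρ_{x+w}) p̃(x+w|ρ). In particular, for W = F_2^m: E(a; P_{F_2^m}) = Ẽ-averaged post-measurement expectation divided by E(a|ρ). -/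

import Mathlib

open Finset Matrix

def dotp {m : ℕ} (a x : Fin m → ZMod 2) : ZMod 2 := ∑ i, a i * x i

/-- Syndrome projection `π_x = Π_i (Id + (-1)^{x_i} S_i)/2`. -/
noncomputable def proj {d : Type*} [Fintype d] [DecidableEq d] {m : ℕ}
    (S : Fin m → Matrix d d ℂ) (x : Fin m → ZMod 2) : Matrix d d ℂ :=
  (List.ofFn fun i => (2 : ℂ)⁻¹ • ((1 : Matrix d d ℂ) + ((-1 : ℂ) ^ (x i).val) • S i)).prod

/-- Stabilizer element `S(a) = Π_i S_i^{a_i}`. -/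
noncomputable def Spow {d : Type*} [Fintype d] [DecidableEq d] {m : ℕ}
    (S : Fin m → Matrix d d ℂ) (a : Fin m → ZMod 2) : Matrix d d ℂ :=
  (List.ofFn fun i => S i ^ (a i).val).prod

/-- `f_a(x) = E(a|ρ_x) p̃(x|ρ)`, the unnormalized post-measurement expectation. -/
noncomputable def fA {d ι : Type*} [Fintype d] [DecidableEq d] [Fintype ι] {m : ℕ}
    (S : Fin m → Matrix d d ℂ) (E : ι → Matrix d d ℂ)
    (P : ι × (Fin m → ZMod 2) → ℝ) (ρ : Matrix d d ℂ)
    (a x : Fin m → ZMod 2) : ℂ :=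
  ∑ p : ι × (Fin m → ZMod 2), (P p : ℂ) *
    (Spow S a * (E p.1 * proj S (x + p.2) * ρ * proj S (x + p.2) * (E p.1)ᴴ)).trace

/-- `g_a(u) = E(a; P_u) P(u) = Σ_e (-1)^{(e,S(a))} P(e,u)`. -/
noncomputable def gA {ι : Type*} [Fintype ι] {m : ℕ}
    (pair : ι → (Fin m → ZMod 2) → ZMod 2)
    (P : ι × (Fin m → ZMod 2) → ℝ) (a u : Fin m → ZMod 2) : ℂ :=
  ∑ e : ι, ((-1 : ℂ) ^ (pair e a).val) * (P (e, u) : ℂ)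

/-- `h_a(b) = E(a+b|ρ)`. -/
noncomputable def hA {d : Type*} [Fintype d] [DecidableEq d] {m : ℕ}
    (S : Fin m → Matrix d d ℂ) (ρ : Matrix d d ℂ) (a b : Fin m → ZMod 2) : ℂ :=
  (Spow S (a + b) * ρ).trace


section Aux
set_option linter.unnecessarySeqFocus false

noncomputable def ch (s : ZMod 2) : ℂ := (-1 : ℂ) ^ s.val

lemma zmod2cases (s : ZMod 2) : s = 0 ∨ s = 1 := by revert s; decide

lemma ch_zero : ch 0 = 1 := rfl
lemma ch_one : ch 1 = -1 := by rw [ch, ZMod.val_one]; norm_num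

lemma ch_add (s t : ZMod 2) : ch (s + t) = ch s * ch t := by
  rcases zmod2cases s with rfl | rfl <;> rcases zmod2cases t with rfl | rfl <;>
    norm_num [ch_zero, ch_one]
  rw [show (2 : ZMod 2) = 0 by decide, ch_zero]

lemma dotp_add_left {m : ℕ} (x y b : Fin m → ZMod 2) :
    dotp (x + y) b = dotp x b + dotp y b := by
  simp [dotp, add_mul, Finset.sum_add_distrib]

lemma dotp_add_right {m : ℕ} (x b c : Fin m → ZMod 2) :
    dotp x (b + c) = dotp x b + dotp x c := by
  simp [dotp, mul_add, Finset.sum_add_distrib]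

lemma dotp_comm {m : ℕ} (a x : Fin m → ZMod 2) : dotp a x = dotp x a := by
  simp [dotp, mul_comm]

lemma dotp_zero_right {m : ℕ} (x : Fin m → ZMod 2) : dotp x 0 = 0 := by simp [dotp]

lemma dotp_single {m : ℕ} (v : Fin m → ZMod 2) (i : Fin m) :
    dotp v (Pi.single i 1) = v i := by
  simp [dotp, Pi.single_apply]

lemma addself {m : ℕ} (v : Fin m → ZMod 2) : v + v = 0 := by
  funext i
  rcases zmod2cases (v i) with h | h <;> simp [h] <;> decide

lemma card_fun2 {m : ℕ} : Fintype.card (Fin m → ZMod 2) = 2 ^ m := by simp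

lemma sum_ch_dotp {m : ℕ} (v : Fin m → ZMod 2) :
    ∑ x : Fin m → ZMod 2, ch (dotp x v) = if v = 0 then (2 : ℂ) ^ m else 0 := by
  split_ifs with h
  · subst h
    simp [dotp_zero_right, ch_zero, card_fun2]
  · obtain ⟨i, hi⟩ := Function.ne_iff.mp h
    have hvi : v i = 1 := by rcases zmod2cases (v i) with h' | h' <;> simp_all
    have key : ∑ x : Fin m → ZMod 2, ch (dotp x v)
        = -∑ x : Fin m → ZMod 2, ch (dotp x v) := by
      conv_lhs => rw [← Equiv.sum_comp (Equiv.addLeft (Pi.single i 1))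
        (fun x => ch (dotp x v))]
      rw [← Finset.sum_neg_distrib]
      apply Finset.sum_congr rfl
      intro x _
      have : dotp (Pi.single i 1 + x) v = 1 + dotp x v := by
        rw [dotp_add_left, dotp_comm (Pi.single i 1) v, dotp_single, hvi]
      simp only [Equiv.coe_addLeft, this, ch_add, ch_one]
      ring
    linear_combination key / 2

variable {d : Type*} [Fintype d] [DecidableEq d]

lemma Spow_zero_dim (S : Fin 0 → Matrix d d ℂ) (x : Fin 0 → ZMod 2) : Spow S x = 1 := by
  simp [Spow]

lemma Spow_succ {m : ℕ} (S : Fin (m + 1) → Matrix d d ℂ) (x : Fin (m + 1) → ZMod 2) :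
    Spow S x = S 0 ^ (x 0).val * Spow (fun i => S i.succ) (fun i => x i.succ) := by
  rw [Spow, List.ofFn_succ, List.prod_cons]; rfl

lemma commute_Spow {m : ℕ} (S : Fin m → Matrix d d ℂ) (A : Matrix d d ℂ)
    (hA : ∀ i, Commute A (S i)) (x : Fin m → ZMod 2) : Commute A (Spow S x) := by
  apply Commute.list_prod_right
  intro y hy
  rw [List.mem_ofFn] at hy
  obtain ⟨i, rfl⟩ := hy
  exact (hA i).pow_right _

lemma pow_val_add (A : Matrix d d ℂ) (hA : A * A = 1) (s t : ZMod 2) :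
    A ^ (s.val) * A ^ (t.val) = A ^ ((s + t).val) := by
  rcases zmod2cases s with rfl | rfl <;> rcases zmod2cases t with rfl | rfl <;>
    simp [ZMod.val_one, show ((1:ZMod 2) + 1) = 0 by decide, pow_succ, hA]

lemma Spow_mul {m : ℕ} (S : Fin m → Matrix d d ℂ)
    (hcomm : ∀ i j, S i * S j = S j * S i) (hinv : ∀ i, S i * S i = 1)
    (x y : Fin m → ZMod 2) : Spow S x * Spow S y = Spow S (x + y) := by
  induction m with
  | zero => simp [Spow_zero_dim]
  | succ n ih =>
    rw [Spow_succ S x, Spow_succ S y, Spow_succ S (x + y)]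
    have hc : Commute (S 0 ^ ((y 0).val))
        (Spow (fun i => S i.succ) (fun i => x i.succ)) := by
      apply commute_Spow
      intro i
      exact (Commute.pow_left (hcomm 0 i.succ) _)
    calc S 0 ^ (x 0).val * Spow (fun i => S i.succ) (fun i => x i.succ) *
          (S 0 ^ (y 0).val * Spow (fun i => S i.succ) (fun i => y i.succ))
        = S 0 ^ (x 0).val * S 0 ^ (y 0).val *
          (Spow (fun i => S i.succ) (fun i => x i.succ) *
           Spow (fun i => S i.succ) (fun i => y i.succ)) := by
          rw [mul_assoc, mul_assoc, ← mul_assoc (Spow _ _), ← hc.eq, mul_assoc]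
      _ = S 0 ^ ((x 0 + y 0).val) * Spow (fun i => S i.succ) ((fun i => x i.succ) + fun i => y i.succ) := by
          rw [pow_val_add _ (hinv 0), ih (fun i => S i.succ)
            (fun i j => hcomm i.succ j.succ) (fun i => hinv i.succ)]
      _ = S 0 ^ (((x + y) 0).val) * Spow (fun i => S i.succ) (fun i => (x + y) i.succ) := rfl

lemma proj_succ {m : ℕ} (S : Fin (m + 1) → Matrix d d ℂ) (y : Fin (m + 1) → ZMod 2) :
    proj S y = ((2 : ℂ)⁻¹ • ((1 : Matrix d d ℂ) + ch (y 0) • S 0)) *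
      proj (fun i => S i.succ) (fun i => y i.succ) := by
  rw [proj, List.ofFn_succ, List.prod_cons]; rfl

lemma sum_zmod2 {M : Type*} [AddCommMonoid M] (G : ZMod 2 → M) :
    ∑ a : ZMod 2, G a = G 0 + G 1 := by
  rw [show (univ : Finset (ZMod 2)) = {0, 1} by decide, Finset.sum_insert (by decide),
    Finset.sum_singleton]

lemma dotp_succ {m : ℕ} (y b : Fin (m + 1) → ZMod 2) :
    dotp y b = y 0 * b 0 + dotp (fun i => y i.succ) (fun i => b i.succ) := by
  rw [dotp, Fin.sum_univ_succ]; rfl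

lemma proj_eq {m : ℕ} (S : Fin m → Matrix d d ℂ) (y : Fin m → ZMod 2) :
    proj S y = ∑ b : Fin m → ZMod 2, ((2 : ℂ)⁻¹ ^ m * ch (dotp y b)) • Spow S b := by
  induction m with
  | zero =>
    rw [show proj S y = 1 from by simp [proj]]
    simp [Spow, dotp, ch]
  | succ n ih =>
    rw [proj_succ, ih]
    rw [← Equiv.sum_comp (Fin.consEquiv fun _ : Fin (n+1) => ZMod 2)
      (fun b => ((2 : ℂ)⁻¹ ^ (n+1) * ch (dotp y b)) • Spow S b)]
    have hdot : ∀ (a : ZMod 2) (f : Fin n → ZMod 2),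
        dotp y (Fin.cons a f) = y 0 * a + dotp (fun i => y i.succ) f := by
      intro a f
      rw [dotp_succ]
      simp [Fin.cons_succ, Fin.cons_zero]
    have hSpow : ∀ (a : ZMod 2) (f : Fin n → ZMod 2),
        Spow S (Fin.cons a f) = S 0 ^ a.val * Spow (fun i => S i.succ) f := by
      intro a f
      rw [Spow_succ]
      simp [Fin.cons_succ, Fin.cons_zero]
    rw [Fintype.sum_prod_type, sum_zmod2]
    simp only [Fin.consEquiv, Equiv.coe_fn_mk, hdot, hSpow, mul_zero, zero_add, mul_one,
      ZMod.val_zero, ZMod.val_one, pow_zero, pow_one, one_mul, ch_add]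
    simp only [Matrix.smul_mul, Matrix.add_mul, Matrix.one_mul, Matrix.mul_sum,
      mul_smul_comm, Finset.smul_sum, smul_smul, smul_add]
    rw [← Finset.sum_add_distrib]
    refine Finset.sum_congr rfl fun f _ => ?_
    match_scalars <;> ring

lemma trace_bc {m : ℕ} (S : Fin m → Matrix d d ℂ)
    (hcomm : ∀ i j, S i * S j = S j * S i) (hinv : ∀ i, S i * S i = 1)
    (ρ : Matrix d d ℂ) (a : Fin m → ZMod 2)
    (E₀ : Matrix d d ℂ) (ε : ℂ) (hconj₀ : E₀ᴴ * Spow S a * E₀ = ε • Spow S a)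
    (b c : Fin m → ZMod 2) :
    (Spow S a * (E₀ * Spow S b * ρ * Spow S c * E₀ᴴ)).trace
      = ε * (Spow S (a + (b + c)) * ρ).trace := by
  have key : ∀ X : Matrix d d ℂ, E₀ᴴ * (Spow S a * (E₀ * X)) = ε • (Spow S a * X) := by
    intro X
    rw [← mul_assoc, ← mul_assoc, hconj₀, Matrix.smul_mul]
  rw [show Spow S a * (E₀ * Spow S b * ρ * Spow S c * E₀ᴴ)
      = (Spow S a * (E₀ * (Spow S b * (ρ * Spow S c)))) * E₀ᴴ by
    simp only [mul_assoc]]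
  rw [Matrix.trace_mul_comm, key, Matrix.trace_smul, smul_eq_mul]
  congr 1
  rw [show Spow S a * (Spow S b * (ρ * Spow S c))
      = (Spow S a * Spow S b * ρ) * Spow S c by simp only [mul_assoc]]
  rw [Matrix.trace_mul_comm, Spow_mul S hcomm hinv a b, ← mul_assoc,
    Spow_mul S hcomm hinv c (a + b), show c + (a + b) = a + (b + c) from by abel]

lemma double_sum_reindex {m : ℕ} (y : Fin m → ZMod 2) (F : (Fin m → ZMod 2) → ℂ) :
    ∑ b : Fin m → ZMod 2, ∑ c : Fin m → ZMod 2,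
        ch (dotp y b) * ch (dotp y c) * F (b + c)
      = (2 : ℂ) ^ m * ∑ c : Fin m → ZMod 2, ch (dotp y c) * F c := by
  have hb : ∀ b : Fin m → ZMod 2,
      ∑ c : Fin m → ZMod 2, ch (dotp y b) * ch (dotp y c) * F (b + c)
        = ∑ c : Fin m → ZMod 2, ch (dotp y c) * F c := by
    intro b
    rw [← Equiv.sum_comp (Equiv.addLeft b) (fun c => ch (dotp y c) * F c)]
    apply Finset.sum_congr rfl
    intro c _
    simp only [Equiv.coe_addLeft]
    rw [dotp_add_right, ch_add]
  rw [Finset.sum_congr rfl (fun b _ => hb b), Finset.sum_const, Finset.card_univ, card_fun2,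
    nsmul_eq_mul]
  push_cast
  ring

lemma trace_term {m : ℕ} (S : Fin m → Matrix d d ℂ)
    (hcomm : ∀ i j, S i * S j = S j * S i) (hinv : ∀ i, S i * S i = 1)
    (ρ : Matrix d d ℂ) (a : Fin m → ZMod 2)
    (E₀ : Matrix d d ℂ) (ε : ℂ) (hconj₀ : E₀ᴴ * Spow S a * E₀ = ε • Spow S a)
    (y : Fin m → ZMod 2) :
    (Spow S a * (E₀ * proj S y * ρ * proj S y * E₀ᴴ)).trace
      = (2 : ℂ)⁻¹ ^ m * ε *
          ∑ c : Fin m → ZMod 2, ch (dotp y c) * (Spow S (a + c) * ρ).trace := by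
  rw [proj_eq S y]
  simp only [Matrix.mul_sum, Matrix.sum_mul, Matrix.mul_smul, Matrix.smul_mul, smul_smul,
    Matrix.trace_sum, Matrix.trace_smul, smul_eq_mul, Finset.mul_sum]
  have h2 : (2 : ℂ)⁻¹ ^ m * (2 : ℂ) ^ m = 1 := by
    rw [← mul_pow]
    norm_num
  calc ∑ x : Fin m → ZMod 2, ∑ i : Fin m → ZMod 2,
        (2:ℂ)⁻¹ ^ m * ch (dotp y x) *
          ((2:ℂ)⁻¹ ^ m * ch (dotp y i) * (Spow S a * (E₀ * Spow S i * ρ * Spow S x * E₀ᴴ)).trace)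
      = ∑ x : Fin m → ZMod 2, ∑ i : Fin m → ZMod 2,
          ((2:ℂ)⁻¹ ^ m * (2:ℂ)⁻¹ ^ m * ε) *
            (ch (dotp y x) * ch (dotp y i) * (Spow S (a + (x + i)) * ρ).trace) := by
        refine Finset.sum_congr rfl fun x _ => Finset.sum_congr rfl fun i _ => ?_
        rw [trace_bc S hcomm hinv ρ a E₀ ε hconj₀ i x,
          show i + x = x + i from add_comm i x]
        ring
    _ = ((2:ℂ)⁻¹ ^ m * (2:ℂ)⁻¹ ^ m * ε) *
          ∑ x : Fin m → ZMod 2, ∑ i : Fin m → ZMod 2,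
            ch (dotp y x) * ch (dotp y i) * (Spow S (a + (x + i)) * ρ).trace := by
        simp only [Finset.mul_sum]
    _ = ((2:ℂ)⁻¹ ^ m * (2:ℂ)⁻¹ ^ m * ε) *
          ((2:ℂ) ^ m * ∑ c : Fin m → ZMod 2, ch (dotp y c) * (Spow S (a + c) * ρ).trace) := by
        rw [double_sum_reindex y (fun c => (Spow S (a + c) * ρ).trace)]
    _ = ∑ i : Fin m → ZMod 2,
          (2:ℂ)⁻¹ ^ m * ε * (ch (dotp y i) * (Spow S (a + i) * ρ).trace) := by
        rw [← Finset.mul_sum,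
          show ((2:ℂ)⁻¹ ^ m * (2:ℂ)⁻¹ ^ m * ε) *
              ((2:ℂ) ^ m * ∑ c : Fin m → ZMod 2, ch (dotp y c) * (Spow S (a + c) * ρ).trace)
            = ((2:ℂ)⁻¹ ^ m * (2:ℂ) ^ m) *
              ((2:ℂ)⁻¹ ^ m * ε * ∑ c : Fin m → ZMod 2, ch (dotp y c) * (Spow S (a + c) * ρ).trace)
            from by ring, h2, one_mul]

lemma fA_eq {ι : Type*} [Fintype ι] {m : ℕ} (S : Fin m → Matrix d d ℂ)
    (hcomm : ∀ i j, S i * S j = S j * S i) (hinv : ∀ i, S i * S i = 1)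
    (E : ι → Matrix d d ℂ) (pair : ι → (Fin m → ZMod 2) → ZMod 2)
    (hconj : ∀ (e : ι) (b : Fin m → ZMod 2),
      (E e)ᴴ * Spow S b * E e = ((-1 : ℂ) ^ (pair e b).val) • Spow S b)
    (P : ι × (Fin m → ZMod 2) → ℝ) (ρ : Matrix d d ℂ) (a x : Fin m → ZMod 2) :
    fA S E P ρ a x = (2 : ℂ)⁻¹ ^ m * ∑ p : ι × (Fin m → ZMod 2),
      (P p : ℂ) * ch (pair p.1 a) *
        ∑ c : Fin m → ZMod 2, ch (dotp (x + p.2) c) * hA S ρ a c := by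
  rw [fA, Finset.mul_sum]
  refine Finset.sum_congr rfl fun p _ => ?_
  rw [trace_term S hcomm hinv ρ a (E p.1) (ch (pair p.1 a)) (hconj p.1 a) (x + p.2)]
  simp only [hA]
  ring

lemma inner_x {m : ℕ} (u' b c t : Fin m → ZMod 2) :
    ∑ x : Fin m → ZMod 2, ch (dotp (u' + x) b) * ch (dotp (x + t) c)
      = if c = b then (2 : ℂ) ^ m * (ch (dotp u' b) * ch (dotp t b)) else 0 := by
  have hterm : ∀ x : Fin m → ZMod 2,
      ch (dotp (u' + x) b) * ch (dotp (x + t) c)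
        = (ch (dotp u' b) * ch (dotp t c)) * ch (dotp x (b + c)) := by
    intro x
    rw [dotp_add_left, dotp_add_left, ch_add, ch_add, dotp_add_right, ch_add]
    ring
  rw [Finset.sum_congr rfl (fun x _ => hterm x), ← Finset.mul_sum, sum_ch_dotp]
  have hiff : b + c = 0 ↔ c = b := by
    constructor
    · intro h
      have := congrArg (fun z => b + z) h
      simpa [← add_assoc, addself b] using this
    · rintro rfl
      exact addself _
  by_cases hc : c = b
  · subst hc
    simp [hiff.mpr rfl]
    ring
  · rw [if_neg (fun h => hc (hiff.mp h)), if_neg hc, mul_zero]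

lemma key_sum {ι : Type*} [Fintype ι] {m : ℕ} (S : Fin m → Matrix d d ℂ)
    (hcomm : ∀ i j, S i * S j = S j * S i) (hinv : ∀ i, S i * S i = 1)
    (E : ι → Matrix d d ℂ) (pair : ι → (Fin m → ZMod 2) → ZMod 2)
    (hconj : ∀ (e : ι) (b : Fin m → ZMod 2),
      (E e)ᴴ * Spow S b * E e = ((-1 : ℂ) ^ (pair e b).val) • Spow S b)
    (P : ι × (Fin m → ZMod 2) → ℝ) (ρ : Matrix d d ℂ) (a : Fin m → ZMod 2)
    (u' b : Fin m → ZMod 2) :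
    ∑ x : Fin m → ZMod 2, ch (dotp (u' + x) b) * fA S E P ρ a x
      = hA S ρ a b * ∑ p : ι × (Fin m → ZMod 2),
          (P p : ℂ) * ch (pair p.1 a) * ch (dotp (u' + p.2) b) := by
  have h2 : (2 : ℂ)⁻¹ ^ m * (2 : ℂ) ^ m = 1 := by
    rw [← mul_pow]
    norm_num
  calc ∑ x : Fin m → ZMod 2, ch (dotp (u' + x) b) * fA S E P ρ a x
      = ∑ x : Fin m → ZMod 2, ∑ p : ι × (Fin m → ZMod 2), ∑ c : Fin m → ZMod 2,
          (ch (dotp (u' + x) b) * ch (dotp (x + p.2) c)) *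
            ((2 : ℂ)⁻¹ ^ m * ((P p : ℂ) * ch (pair p.1 a) * hA S ρ a c)) := by
        refine Finset.sum_congr rfl fun x _ => ?_
        rw [fA_eq S hcomm hinv E pair hconj P ρ a x, Finset.mul_sum, Finset.mul_sum]
        refine Finset.sum_congr rfl fun p _ => ?_
        rw [Finset.mul_sum, Finset.mul_sum, Finset.mul_sum]
        refine Finset.sum_congr rfl fun c _ => ?_
        ring
    _ = ∑ p : ι × (Fin m → ZMod 2), ∑ c : Fin m → ZMod 2,
          (∑ x : Fin m → ZMod 2, ch (dotp (u' + x) b) * ch (dotp (x + p.2) c)) *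
            ((2 : ℂ)⁻¹ ^ m * ((P p : ℂ) * ch (pair p.1 a) * hA S ρ a c)) := by
        rw [Finset.sum_comm]
        refine Finset.sum_congr rfl fun p _ => ?_
        rw [Finset.sum_comm]
        refine Finset.sum_congr rfl fun c _ => ?_
        rw [Finset.sum_mul]
    _ = ∑ p : ι × (Fin m → ZMod 2),
          ((2 : ℂ) ^ m * (ch (dotp u' b) * ch (dotp p.2 b))) *
            ((2 : ℂ)⁻¹ ^ m * ((P p : ℂ) * ch (pair p.1 a) * hA S ρ a b)) := by
        refine Finset.sum_congr rfl fun p _ => ?_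
        rw [Finset.sum_congr rfl (fun c _ => by rw [inner_x u' b c p.2, ite_mul, zero_mul]),
          Finset.sum_ite_eq' univ b]
        simp
    _ = hA S ρ a b * ∑ p : ι × (Fin m → ZMod 2),
          (P p : ℂ) * ch (pair p.1 a) * ch (dotp (u' + p.2) b) := by
        rw [Finset.mul_sum]
        refine Finset.sum_congr rfl fun p _ => ?_
        rw [dotp_add_left, ch_add]
        calc ((2 : ℂ) ^ m * (ch (dotp u' b) * ch (dotp p.2 b))) *
              ((2 : ℂ)⁻¹ ^ m * ((P p : ℂ) * ch (pair p.1 a) * hA S ρ a b))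
            = ((2 : ℂ)⁻¹ ^ m * (2 : ℂ) ^ m) *
              (hA S ρ a b * ((P p : ℂ) * ch (pair p.1 a) *
                (ch (dotp u' b) * ch (dotp p.2 b)))) := by ring
          _ = _ := by rw [h2, one_mul]

lemma sum_ch_filter {m : ℕ} (U : Submodule (ZMod 2) (Fin m → ZMod 2))
    [DecidablePred (· ∈ U)] (v : Fin m → ZMod 2) :
    ∑ b ∈ Finset.univ.filter (· ∈ U), ch (dotp v b)
      = if ∀ w ∈ U, dotp v w = 0 then ((Finset.univ.filter (· ∈ U)).card : ℂ) else 0 := by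
  split_ifs with h
  · rw [Finset.sum_congr rfl (fun b hb => ?_), Finset.sum_const, nsmul_eq_mul, mul_one]
    rw [h b (Finset.mem_filter.mp hb).2, ch_zero]
  · push_neg at h
    obtain ⟨w0, hw0U, hw0⟩ := h
    have hw1 : dotp v w0 = 1 := by
      rcases zmod2cases (dotp v w0) with h' | h' <;> simp_all
    have key : ∑ b ∈ Finset.univ.filter (· ∈ U), ch (dotp v b)
        = -∑ b ∈ Finset.univ.filter (· ∈ U), ch (dotp v b) := by
      rw [← Finset.sum_neg_distrib]
      refine Finset.sum_nbij' (fun b => w0 + b) (fun b => w0 + b) ?_ ?_ ?_ ?_ ?_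
      · intro b hb
        simp only [Finset.mem_filter, Finset.mem_univ, true_and] at hb ⊢
        exact U.add_mem hw0U hb
      · intro b hb
        simp only [Finset.mem_filter, Finset.mem_univ, true_and] at hb ⊢
        exact U.add_mem hw0U hb
      · intro b _
        show w0 + (w0 + b) = b
        rw [← add_assoc, addself w0, zero_add]
      · intro b _
        show w0 + (w0 + b) = b
        rw [← add_assoc, addself w0, zero_add]
      · intro b _
        rw [dotp_add_right, ch_add, hw1, ch_one]
        ring
    linear_combination key / 2

noncomputable def Bform (m : ℕ) : LinearMap.BilinForm (ZMod 2) (Fin m → ZMod 2) :=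
  LinearMap.mk₂ (ZMod 2) dotp dotp_add_left
    (fun r x b => by simp [dotp, Finset.mul_sum, mul_assoc])
    dotp_add_right
    (fun r x b => by
      simp only [dotp, Pi.smul_apply, smul_eq_mul, Finset.mul_sum]
      refine Finset.sum_congr rfl fun i _ => ?_
      ring)

lemma Bform_apply {m : ℕ} (x y : Fin m → ZMod 2) : Bform m x y = dotp x y := rfl

lemma Bform_refl {m : ℕ} : (Bform m).IsRefl := by
  intro x y h
  rw [Bform_apply, dotp_comm]
  exact h

lemma Bform_nondeg {m : ℕ} : (Bform m).Nondegenerate := by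
  refine (LinearMap.IsRefl.nondegenerate_iff_separatingLeft Bform_refl).mpr ?_
  intro v h
  funext i
  have := h (Pi.single i 1)
  rw [Bform_apply, dotp_single] at this
  exact this

lemma mem_orth_iff {m : ℕ} (W : Submodule (ZMod 2) (Fin m → ZMod 2))
    (b : Fin m → ZMod 2) :
    b ∈ (Bform m).orthogonal W ↔ ∀ w ∈ W, dotp b w = 0 := by
  rw [LinearMap.BilinForm.mem_orthogonal_iff]
  constructor
  · intro h w hw
    rw [dotp_comm]
    exact h w hw
  · intro h w hw
    have := h w hw
    rw [dotp_comm] at this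
    exact this

lemma card_orth {m k : ℕ} (W : Submodule (ZMod 2) (Fin m → ZMod 2))
    (hk : Module.finrank (ZMod 2) W = k) [DecidablePred (· ∈ (Bform m).orthogonal W)] :
    ((Finset.univ.filter (· ∈ (Bform m).orthogonal W)).card : ℕ) = 2 ^ (m - k) := by
  rw [← Fintype.card_subtype]
  have : Fintype.card {x // x ∈ (Bform m).orthogonal W}
      = Fintype.card (ZMod 2) ^ Module.finrank (ZMod 2) ((Bform m).orthogonal W) :=
    Module.card_eq_pow_finrank
  rw [this, ZMod.card,
    LinearMap.BilinForm.finrank_orthogonal Bform_nondeg W, hk,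
    Module.finrank_fin_fun]

lemma double_orth {m : ℕ} (W : Submodule (ZMod 2) (Fin m → ZMod 2))
    (v : Fin m → ZMod 2) :
    (∀ w ∈ (Bform m).orthogonal W, dotp v w = 0) ↔ v ∈ W := by
  rw [← mem_orth_iff ((Bform m).orthogonal W) v,
    LinearMap.BilinForm.orthogonal_orthogonal Bform_nondeg Bform_refl W]

end Aux

/-- Coset-averaged calibration: for a `k`-dimensional subspace `W ⊆ F_2^m`, the
coset-aggregated quantity `E(a;P_{[u]})P([u]) = Σ_{w∈W} g_a(u+w)` equals
`2^{k-m} Σ_{b∈W^⊥} Σ_x (-1)^{(u+x)·b} f_a(x)/h_a(b)` (the sum over cosets `[x]` of the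
coset-aggregated `f_a` being rewritten as a sum over all `x`); in particular for
`W = F_2^m` one gets `E(a;P_{F_2^m}) = (Σ_x f_a(x)) / E(a|ρ)`. -/
theorem calibration_coset {d ι : Type*} [Fintype d] [DecidableEq d] [Fintype ι] {m : ℕ}
    (S : Fin m → Matrix d d ℂ)
    (hcomm : ∀ i j, S i * S j = S j * S i)
    (hinv : ∀ i, S i * S i = 1)
    (E : ι → Matrix d d ℂ)
    (pair : ι → (Fin m → ZMod 2) → ZMod 2)
    (hconj : ∀ (e : ι) (b : Fin m → ZMod 2),
      (E e)ᴴ * Spow S b * E e = ((-1 : ℂ) ^ (pair e b).val) • Spow S b)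
    (P : ι × (Fin m → ZMod 2) → ℝ) (hPnn : ∀ p, 0 ≤ P p) (hPsum : ∑ p, P p = 1)
    (ρ : Matrix d d ℂ) (a : Fin m → ZMod 2)
    (hh : ∀ b, hA S ρ a b ≠ 0)
    (W : Submodule (ZMod 2) (Fin m → ZMod 2)) [DecidablePred (· ∈ W)] (k : ℕ)
    (hk : Module.finrank (ZMod 2) W = k)
    (u : Fin m → ZMod 2) :
    (∑ w ∈ Finset.univ.filter (· ∈ W), gA pair P a (u + w)
      = ((2 : ℂ) ^ k / (2 : ℂ) ^ m) *
          ∑ b ∈ Finset.univ.filter (fun b => ∀ w ∈ W, dotp b w = 0),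
            ∑ x : Fin m → ZMod 2,
              ((-1 : ℂ) ^ (dotp (u + x) b).val) * fA S E P ρ a x / hA S ρ a b) ∧
    (∑ v : Fin m → ZMod 2, gA pair P a v
      = (∑ x : Fin m → ZMod 2, fA S E P ρ a x) / hA S ρ a 0) := by
  classical
  have hch : ∀ s : ZMod 2, ((-1 : ℂ)) ^ s.val = ch s := fun _ => rfl
  have hkm : k ≤ m := by
    have h1 : Module.finrank (ZMod 2) W ≤ Module.finrank (ZMod 2) (Fin m → ZMod 2) :=
      W.finrank_le
    rwa [hk, Module.finrank_fin_fun] at h1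
  constructor
  · -- part 1
    have hFeq : (Finset.univ.filter (fun b => ∀ w ∈ W, dotp b w = 0))
        = Finset.univ.filter (· ∈ (Bform m).orthogonal W) := by
      ext b
      simp only [Finset.mem_filter, Finset.mem_univ, true_and, mem_orth_iff]
    have horthsum : ∀ v : Fin m → ZMod 2,
        ∑ b ∈ Finset.univ.filter (fun b => ∀ w ∈ W, dotp b w = 0), ch (dotp v b)
          = if v ∈ W then ((2:ℂ))^(m-k) else 0 := by
      intro v
      rw [hFeq, sum_ch_filter ((Bform m).orthogonal W) v, card_orth W hk]
      simp only [double_orth]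
      norm_cast
    have hterm : ∀ b : Fin m → ZMod 2,
        (∑ x : Fin m → ZMod 2,
            ((-1 : ℂ) ^ (dotp (u + x) b).val) * fA S E P ρ a x / hA S ρ a b)
          = ∑ p : ι × (Fin m → ZMod 2),
              (P p : ℂ) * ch (pair p.1 a) * ch (dotp (u + p.2) b) := by
      intro b
      rw [← Finset.sum_div]
      simp only [hch]
      rw [key_sum S hcomm hinv E pair hconj P ρ a u b, mul_div_cancel_left₀ _ (hh b)]
    rw [Finset.sum_congr rfl fun b _ => hterm b]
    have hsum2 : ∑ b ∈ (Finset.univ.filter fun b => ∀ w ∈ W, dotp b w = 0),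
          (∑ p : ι × (Fin m → ZMod 2),
            (P p : ℂ) * ch (pair p.1 a) * ch (dotp (u + p.2) b))
        = ∑ p : ι × (Fin m → ZMod 2), (P p : ℂ) * ch (pair p.1 a) *
            (if u + p.2 ∈ W then ((2:ℂ))^(m-k) else 0) := by
      rw [Finset.sum_comm]
      refine Finset.sum_congr rfl fun p _ => ?_
      rw [← Finset.mul_sum, horthsum (u + p.2)]
    rw [hsum2, Finset.mul_sum]
    have hpow : (2:ℂ)^k / (2:ℂ)^m * (2:ℂ)^(m-k) = 1 := by
      rw [div_mul_eq_mul_div, ← pow_add, show k + (m - k) = m by omega,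
        div_self (pow_ne_zero _ two_ne_zero)]
    have hper : ∀ p : ι × (Fin m → ZMod 2),
        (2:ℂ)^k/(2:ℂ)^m * ((P p : ℂ) * ch (pair p.1 a) *
            (if u + p.2 ∈ W then ((2:ℂ))^(m-k) else 0))
          = (P p : ℂ) * ch (pair p.1 a) * (if u + p.2 ∈ W then 1 else 0) := by
      intro p
      split_ifs with h
      · rw [mul_one, show (2:ℂ)^k/(2:ℂ)^m * ((P p : ℂ) * ch (pair p.1 a) * (2:ℂ)^(m-k))
            = ((2:ℂ)^k/(2:ℂ)^m * (2:ℂ)^(m-k)) * ((P p : ℂ) * ch (pair p.1 a)) from by ring,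
          hpow, one_mul]
      · simp
    rw [Finset.sum_congr rfl fun p _ => hper p]
    rw [Fintype.sum_prod_type]
    simp only [gA, hch]
    rw [Finset.sum_comm]
    refine Finset.sum_congr rfl fun e _ => ?_
    rw [← Equiv.sum_comp (Equiv.addLeft u)
      (fun v => (P (e, v) : ℂ) * ch (pair e a) * (if u + v ∈ W then 1 else 0))]
    simp only [Equiv.coe_addLeft]
    have hcancel : ∀ v : Fin m → ZMod 2, u + (u + v) = v := fun v => by
      rw [← add_assoc, addself u, zero_add]
    simp only [hcancel]
    rw [Finset.sum_filter]
    refine Finset.sum_congr rfl fun v _ => ?_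
    split_ifs with h
    · ring
    · simp
  · -- part 2
    have h0 := key_sum S hcomm hinv E pair hconj P ρ a 0 0
    simp only [dotp_zero_right, ch_zero, mul_one, one_mul] at h0
    rw [h0, mul_div_cancel_left₀ _ (hh 0)]
    rw [Fintype.sum_prod_type]
    simp only [gA, hch]
    rw [Finset.sum_comm]
    refine Finset.sum_congr rfl fun e _ => Finset.sum_congr rfl fun v _ => mul_comm _ _
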